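/- Let G be a strongly connected directed graph on {1,2,3} with (i,j) ∈ E, (i,k) ∈ E, (k,j) ∈ E where k = 6−i−j, and let M be defined by the DirectedMove recurrence. Then for all n ≥ 2, M(i,k,n−1) + M(k,j,n−1) + 1 ≤ 2·M(i,j,n−1) + M(j,i,n−1) + 2. -/
import Mathlib

lemma M_aux (E : ℕ → ℕ → Prop) (M : ℕ → ℕ → ℕ → ℕ)
    (h0 : ∀ i j, M i j 0 = 0)
    (hrecE : ∀ i j n, i ∈ ({1, 2, 3} : Set ℕ) → j ∈ ({1, 2, 3} : Set ℕ) → i ≠ j → 1 ≤ n →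
      E i j → M i j n = M i (6 - i - j) (n - 1) + M (6 - i - j) j (n - 1) + 1)
    (hrecN : ∀ i j n, i ∈ ({1, 2, 3} : Set ℕ) → j ∈ ({1, 2, 3} : Set ℕ) → i ≠ j → 1 ≤ n →
      ¬ E i j → M i j n = 2 * M i j (n - 1) + M j i (n - 1) + 2) :
    ∀ n, ∀ x y, x ∈ ({1, 2, 3} : Set ℕ) → y ∈ ({1, 2, 3} : Set ℕ) → x ≠ y →
      M x (6 - x - y) n + M (6 - x - y) y n + 1 ≤ 2 * M x y n + M y x n + 2 := by
  intro n
  induction n with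
  | zero => intro x y _ _ _; simp [h0]
  | succ n ih =>
    intro x y hx hy hxy
    set z := 6 - x - y with hz
    have hfacts : z ∈ ({1, 2, 3} : Set ℕ) ∧ z ≠ x ∧ z ≠ y ∧ 6 - x - z = y ∧
        6 - z - y = x ∧ 6 - z - x = y ∧ 6 - y - z = x ∧ 6 - y - x = z := by
      clear ih
      simp only [Set.mem_insert_iff, Set.mem_singleton_iff] at hx hy ⊢
      rw [hz]
      rcases hx with rfl | rfl | rfl <;> rcases hy with rfl | rfl | rfl <;>
        first | (exact absurd rfl hxy) | norm_num
    obtain ⟨hzS, hzx, hzy, e1, e2, e3, e4, e5⟩ := hfacts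
    have I1 := ih x y hx hy hxy
    rw [← hz] at I1
    have I2 := ih y x hy hx (Ne.symm hxy)
    have I3 := ih x z hx hzS (Ne.symm hzx)
    have I5 := ih z y hzS hy hzy
    rw [e5] at I2
    rw [e1] at I3
    rw [e2] at I5
    have h1n : (1:ℕ) ≤ n + 1 := by omega
    have Exz : M x z (n + 1) ≤ 2 * M x z n + M z x n + 2 := by
      by_cases h : E x z
      · rw [hrecE x z (n + 1) hx hzS (Ne.symm hzx) h1n h]
        simp only [Nat.add_sub_cancel, e1]
        omega
      · rw [hrecN x z (n + 1) hx hzS (Ne.symm hzx) h1n h]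
        simp only [Nat.add_sub_cancel]
        omega
    have Ezy : M z y (n + 1) ≤ 2 * M z y n + M y z n + 2 := by
      by_cases h : E z y
      · rw [hrecE z y (n + 1) hzS hy hzy h1n h]
        simp only [Nat.add_sub_cancel, e2]
        omega
      · rw [hrecN z y (n + 1) hzS hy hzy h1n h]
        simp only [Nat.add_sub_cancel]
        omega
    have Lxy : M x z n + M z y n + 1 ≤ M x y (n + 1) := by
      by_cases h : E x y
      · rw [hrecE x y (n + 1) hx hy hxy h1n h]
        simp only [Nat.add_sub_cancel, ← hz]
        omega
      · rw [hrecN x y (n + 1) hx hy hxy h1n h]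
        simp only [Nat.add_sub_cancel]
        omega
    have Lyx : M y z n + M z x n + 1 ≤ M y x (n + 1) := by
      by_cases h : E y x
      · rw [hrecE y x (n + 1) hy hx (Ne.symm hxy) h1n h]
        simp only [Nat.add_sub_cancel, e5]
        omega
      · rw [hrecN y x (n + 1) hy hx (Ne.symm hxy) h1n h]
        simp only [Nat.add_sub_cancel]
        omega
    omega

/-- If `(i,j), (i,k), (k,j) ∈ E` with `k = 6-i-j`, then for all `n ≥ 2`,
`M(i,k,n-1) + M(k,j,n-1) + 1 ≤ 2·M(i,j,n-1) + M(j,i,n-1) + 2`. -/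
theorem M_key_inequality (E : ℕ → ℕ → Prop)
    (hconn : ∀ i j, i ∈ ({1, 2, 3} : Set ℕ) → j ∈ ({1, 2, 3} : Set ℕ) →
      Relation.ReflTransGen
        (fun a b => a ∈ ({1, 2, 3} : Set ℕ) ∧ b ∈ ({1, 2, 3} : Set ℕ) ∧ E a b) i j)
    (M : ℕ → ℕ → ℕ → ℕ)
    (h0 : ∀ i j, M i j 0 = 0)
    (hrecE : ∀ i j n, i ∈ ({1, 2, 3} : Set ℕ) → j ∈ ({1, 2, 3} : Set ℕ) → i ≠ j → 1 ≤ n →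
      E i j → M i j n = M i (6 - i - j) (n - 1) + M (6 - i - j) j (n - 1) + 1)
    (hrecN : ∀ i j n, i ∈ ({1, 2, 3} : Set ℕ) → j ∈ ({1, 2, 3} : Set ℕ) → i ≠ j → 1 ≤ n →
      ¬ E i j → M i j n = 2 * M i j (n - 1) + M j i (n - 1) + 2)
    (i j k : ℕ) (hi : i ∈ ({1, 2, 3} : Set ℕ)) (hj : j ∈ ({1, 2, 3} : Set ℕ))
    (hij : i ≠ j) (hk : k = 6 - i - j)
    (hEij : E i j) (hEik : E i k) (hEkj : E k j) :
    ∀ n, 2 ≤ n →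
      M i k (n - 1) + M k j (n - 1) + 1 ≤ 2 * M i j (n - 1) + M j i (n - 1) + 2 := by
  subst hk
  intro n _
  exact M_aux E M h0 hrecE hrecN (n - 1) i j hi hj hij
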